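/- arXiv:2109.12497 — 6 statements merged into one kernel-verified Lean document; each statement's English description precedes it below -/
import Mathlib

section
/- For a single quantized coordinate, the second moment satisfies E[ξ_i²] ≤ (v_i/W)² + (1/s²)·p, where p = (|v_i|/W)·s − l is the fractional part probability used in the stochastic rounding. -/
/-- Second-moment bound for a single quantized coordinate:
`E[ξ²] ≤ (vi/W)² + p/s²` where `ξ` is `l/s` with probability `1-p` and
`(l+1)/s` with probability `p`, `p = (|vi|/W)·s - l`. -/
theorem qsgd_coord_second_moment
    (s : ℕ) (hs : 1 ≤ s) (W vi : ℝ) (hW : 0 < W) (hv : |vi| ≤ W)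
    (l : ℕ) (hls : l < s)
    (hlo : (l : ℝ) / s ≤ |vi| / W) (hhi : |vi| / W ≤ ((l : ℝ) + 1) / s)
    (p : ℝ) (hp : p = |vi| / W * s - l) :
    (1 - p) * ((l : ℝ) / s) ^ 2 + p * (((l : ℝ) + 1) / s) ^ 2
      ≤ (vi / W) ^ 2 + (1 / (s : ℝ) ^ 2) * p := by
  have hs0 : (0 : ℝ) < s := by exact_mod_cast hs
  have habs : (vi / W) ^ 2 = (|vi| / W) ^ 2 := by
    rw [div_pow, div_pow, sq_abs]
  have hx : |vi| / W * s = l + p := by rw [hp]; ring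
  have hx2 : |vi| / W = ((l : ℝ) + p) / s := by
    field_simp at hx ⊢; linarith
  rw [habs, hx2]
  have hp2 : 0 ≤ p ^ 2 := sq_nonneg p
  field_simp
  nlinarith [sq_nonneg p]
end

section
/- The expected squared L2 norm of the quantized vector satisfies E[‖Q_s(v, W)‖₂²] ≤ (1 + min(n/s², √n/s)) · W², where W ≥ ‖v‖₂. -/
open Finset in
/-- Expected squared L2 norm of the quantized vector:
`E[‖Q_s(v,W)‖₂²] ≤ (1 + min(n/s², √n/s))·W²`, where `Q_s(v,W)ᵢ = W·sign(vᵢ)·ξᵢ`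
with independent stochastic rounding variables `ξᵢ`, so that
`E[‖Q_s(v,W)‖₂²] = Σᵢ (W·sign(vᵢ))²·E[ξᵢ²]`. -/
theorem qsgd_maxnorm_second_moment
    (n s : ℕ) (hs : 1 ≤ s) (v : Fin n → ℝ) (W : ℝ) (hW : 0 < W)
    (hWv : Real.sqrt (∑ i, v i ^ 2) ≤ W)
    (l : Fin n → ℕ) (hls : ∀ i, l i < s)
    (hlo : ∀ i, (l i : ℝ) / s ≤ |v i| / W)
    (hhi : ∀ i, |v i| / W ≤ ((l i : ℝ) + 1) / s)
    (p : Fin n → ℝ) (hp : ∀ i, p i = |v i| / W * s - l i) :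
    ∑ i, (W * Real.sign (v i)) ^ 2 *
        ((1 - p i) * ((l i : ℝ) / s) ^ 2 + p i * (((l i : ℝ) + 1) / s) ^ 2)
      ≤ (1 + min ((n : ℝ) / (s : ℝ) ^ 2) (Real.sqrt n / s)) * W ^ 2 := by
  have hs0 : (0:ℝ) < (s:ℝ) := by exact_mod_cast hs
  set u : Fin n → ℝ := fun i => |v i| / W with hu
  have hu0 : ∀ i, 0 ≤ u i := fun i => div_nonneg (abs_nonneg _) hW.le
  have hp0 : ∀ i, 0 ≤ p i := by
    intro i
    rw [hp]
    have h := (div_le_iff₀ hs0).mp (hlo i)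
    linarith
  have hp1 : ∀ i, p i ≤ 1 := by
    intro i
    rw [hp]
    have h := (le_div_iff₀ hs0).mp (hhi i)
    linarith
  have hup : ∀ i, u i = ((l i : ℝ) + p i) / s := by
    intro i
    rw [hp]
    field_simp [hu]
    simp only [hu]
    rw [div_mul_cancel₀ _ hW.ne']
    ring
  have husum : ∑ i, u i ^ 2 ≤ 1 := by
    have h1 : ∑ i, v i ^ 2 ≤ W ^ 2 := by
      have h0 : (0:ℝ) ≤ ∑ i, v i ^ 2 :=
        Finset.sum_nonneg fun i _ => sq_nonneg (v i)
      nlinarith [Real.sq_sqrt h0, hWv, Real.sqrt_nonneg (∑ i, v i ^ 2)]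
    have : ∑ i, u i ^ 2 = (∑ i, v i ^ 2) / W ^ 2 := by
      rw [Finset.sum_div]
      refine Finset.sum_congr rfl fun i _ => ?_
      rw [hu]
      rw [div_pow, sq_abs]
    rw [this]
    rw [div_le_one (by positivity)]
    linarith
  have key : ∀ i, (W * Real.sign (v i)) ^ 2 *
        ((1 - p i) * ((l i : ℝ) / s) ^ 2 + p i * (((l i : ℝ) + 1) / s) ^ 2)
      ≤ W ^ 2 * (u i ^ 2 + p i * (1 - p i) / s ^ 2) := by
    intro i
    have hE : (1 - p i) * ((l i : ℝ) / s) ^ 2 + p i * (((l i : ℝ) + 1) / s) ^ 2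
        = u i ^ 2 + p i * (1 - p i) / s ^ 2 := by
      rw [hup i]
      field_simp
      ring
    rw [hE]
    have hE0 : 0 ≤ u i ^ 2 + p i * (1 - p i) / s ^ 2 := by
      have := hp0 i; have := hp1 i
      have : 0 ≤ p i * (1 - p i) := by nlinarith
      positivity
    have hsgn : (Real.sign (v i)) ^ 2 ≤ 1 := by
      rcases Real.sign_apply_eq (v i) with h | h | h <;> rw [h] <;> norm_num
    calc (W * Real.sign (v i)) ^ 2 * (u i ^ 2 + p i * (1 - p i) / s ^ 2)
        = W ^ 2 * (Real.sign (v i)) ^ 2 * (u i ^ 2 + p i * (1 - p i) / s ^ 2) := by ring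
      _ ≤ W ^ 2 * 1 * (u i ^ 2 + p i * (1 - p i) / s ^ 2) := by
          apply mul_le_mul_of_nonneg_right _ hE0
          apply mul_le_mul_of_nonneg_left hsgn (sq_nonneg W)
      _ = W ^ 2 * (u i ^ 2 + p i * (1 - p i) / s ^ 2) := by ring
  have hpl : ∀ i, p i * (1 - p i) ≤ 1 := by
    intro i; have := hp0 i; have := hp1 i; nlinarith
  have hpu2 : ∀ i, p i * (1 - p i) ≤ u i * s := by
    intro i
    have h1 : p i ≤ u i * s := by
      rw [hp]; have : (0:ℝ) ≤ (l i : ℝ) := Nat.cast_nonneg _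
      simp only [hu]; linarith
    have := hp0 i; have := hp1 i
    nlinarith
  have hT1 : ∑ i, p i * (1 - p i) / s ^ 2 ≤ (n : ℝ) / s ^ 2 := by
    calc ∑ i, p i * (1 - p i) / s ^ 2 ≤ ∑ i : Fin n, 1 / (s:ℝ) ^ 2 := by
          apply Finset.sum_le_sum
          intro i _
          exact div_le_div_of_nonneg_right (hpl i) (by positivity) |>.trans_eq rfl
      _ = (n : ℝ) / s ^ 2 := by
          rw [Finset.sum_const, Finset.card_univ, Fintype.card_fin]
          simp [div_eq_mul_inv, mul_comm]
  have hsumu : ∑ i, u i ≤ Real.sqrt n := by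
    have hcs : (∑ i, u i) ^ 2 ≤ (n : ℝ) * ∑ i, u i ^ 2 := by
      have := sq_sum_le_card_mul_sum_sq (s := (Finset.univ : Finset (Fin n))) (f := u)
      simpa using this
    have h2 : (∑ i, u i) ^ 2 ≤ (n : ℝ) := by
      calc (∑ i, u i) ^ 2 ≤ (n : ℝ) * ∑ i, u i ^ 2 := hcs
        _ ≤ (n : ℝ) * 1 := by
            apply mul_le_mul_of_nonneg_left husum (Nat.cast_nonneg n)
        _ = n := mul_one _
    have h3 : 0 ≤ ∑ i, u i := Finset.sum_nonneg fun i _ => hu0 i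
    nlinarith [Real.sq_sqrt (Nat.cast_nonneg n : (0:ℝ) ≤ n), Real.sqrt_nonneg (n:ℝ), h2, h3]
  have hT2 : ∑ i, p i * (1 - p i) / s ^ 2 ≤ Real.sqrt n / s := by
    calc ∑ i, p i * (1 - p i) / s ^ 2 ≤ ∑ i, u i / s := by
          apply Finset.sum_le_sum
          intro i _
          have h : u i / s = u i * s / s ^ 2 := by field_simp
          rw [h]
          exact div_le_div_of_nonneg_right (hpu2 i) (by positivity)
      _ = (∑ i, u i) / s := by rw [Finset.sum_div]
      _ ≤ Real.sqrt n / s := by gcongr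
  calc ∑ i, (W * Real.sign (v i)) ^ 2 *
        ((1 - p i) * ((l i : ℝ) / s) ^ 2 + p i * (((l i : ℝ) + 1) / s) ^ 2)
      ≤ ∑ i, W ^ 2 * (u i ^ 2 + p i * (1 - p i) / s ^ 2) :=
        Finset.sum_le_sum fun i _ => key i
    _ = W ^ 2 * ((∑ i, u i ^ 2) + ∑ i, p i * (1 - p i) / s ^ 2) := by
        rw [← Finset.mul_sum, Finset.sum_add_distrib]
    _ ≤ W ^ 2 * (1 + min ((n : ℝ) / (s : ℝ) ^ 2) (Real.sqrt n / s)) := by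
        apply mul_le_mul_of_nonneg_left _ (sq_nonneg W)
        exact add_le_add husum (le_min hT1 hT2)
    _ = (1 + min ((n : ℝ) / (s : ℝ) ^ 2) (Real.sqrt n / s)) * W ^ 2 := by ring
end

section
/- The quantization variance satisfies E[‖Q_s(v, W) − v‖₂²] ≤ (1 + min(n/s², √n/s)) · W², where W ≥ ‖v‖₂. -/
open Finset in
/-- Quantization variance bound:
`E[‖Q_s(v,W) - v‖₂²] ≤ (1 + min(n/s², √n/s))·W²`, where the expectation is
written out explicitly coordinatewise over the two-point stochastic rounding
distribution (`Q_s(v,W)ᵢ` equals `W·sign(vᵢ)·(l i)/s` with probability `1 - pᵢ`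
and `W·sign(vᵢ)·(l i + 1)/s` with probability `pᵢ`). -/
theorem qsgd_maxnorm_variance_bound
    (n s : ℕ) (hs : 1 ≤ s) (v : Fin n → ℝ) (W : ℝ) (hW : 0 < W)
    (hWv : Real.sqrt (∑ i, v i ^ 2) ≤ W)
    (l : Fin n → ℕ) (hls : ∀ i, l i < s)
    (hlo : ∀ i, (l i : ℝ) / s ≤ |v i| / W)
    (hhi : ∀ i, |v i| / W ≤ ((l i : ℝ) + 1) / s)
    (p : Fin n → ℝ) (hp : ∀ i, p i = |v i| / W * s - l i) :
    ∑ i, ((1 - p i) * (W * Real.sign (v i) * ((l i : ℝ) / s) - v i) ^ 2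
          + p i * (W * Real.sign (v i) * (((l i : ℝ) + 1) / s) - v i) ^ 2)
      ≤ (1 + min ((n : ℝ) / (s : ℝ) ^ 2) (Real.sqrt n / s)) * W ^ 2 := by
  have hsR : (0 : ℝ) < s := by exact_mod_cast hs
  have hp0 : ∀ i, 0 ≤ p i := by
    intro i
    have h := (div_le_div_iff₀ hsR hW).mp (hlo i)
    have h1 : (l i : ℝ) ≤ |v i| / W * s := by
      rw [div_mul_eq_mul_div, le_div_iff₀ hW]; linarith
    rw [hp i]; linarith
  have hp1 : ∀ i, p i ≤ 1 := by
    intro i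
    have := hhi i
    rw [div_le_div_iff₀ hW hsR] at this
    rw [hp i]
    have : |v i| / W * s ≤ (l i : ℝ) + 1 := by
      rw [div_mul_eq_mul_div, div_le_iff₀ hW]; linarith
    linarith
  -- per-coordinate identity
  have key : ∀ i, (1 - p i) * (W * Real.sign (v i) * ((l i : ℝ) / s) - v i) ^ 2
          + p i * (W * Real.sign (v i) * (((l i : ℝ) + 1) / s) - v i) ^ 2
          = W ^ 2 / s ^ 2 * (p i * (1 - p i) * (Real.sign (v i)) ^ 2) := by
    intro i
    rcases lt_trichotomy (v i) 0 with hv | hv | hv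
    · have hsign : Real.sign (v i) = -1 := Real.sign_of_neg hv
      have habs : |v i| = -v i := abs_of_neg hv
      have hpv : p i = -v i / W * s - l i := by rw [hp i, habs]
      rw [hsign, hpv]
      field_simp
      ring
    · have hl0 : (l i : ℝ) = 0 := by
        have := hlo i
        rw [hv] at this
        simp at this
        have h1 : (l i : ℝ) / s ≤ 0 := by simpa using this
        have h2 : (0:ℝ) ≤ (l i : ℝ) / s := by positivity
        have : (l i : ℝ) / s = 0 := le_antisymm h1 h2
        field_simp at this
        exact_mod_cast this
      have hpv : p i = 0 := by rw [hp i, hv]; simp [hl0]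
      rw [hv, hpv, hl0, Real.sign_zero]
      ring
    · have hsign : Real.sign (v i) = 1 := Real.sign_of_pos hv
      have habs : |v i| = v i := abs_of_pos hv
      have hpv : p i = v i / W * s - l i := by rw [hp i, habs]
      rw [hsign, hpv]
      field_simp
      ring
  rw [Finset.sum_congr rfl fun i _ => key i, ← Finset.mul_sum]
  have hsq : ∀ i, (Real.sign (v i)) ^ 2 ≤ 1 := by
    intro i
    rcases lt_trichotomy (v i) 0 with hv | hv | hv
    · rw [Real.sign_of_neg hv]; norm_num
    · rw [hv, Real.sign_zero]; norm_num
    · rw [Real.sign_of_pos hv]; norm_num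
  have hterm_lep : ∀ i, p i * (1 - p i) * (Real.sign (v i)) ^ 2 ≤ p i := by
    intro i
    have h1 := hp0 i; have h2 := hp1 i; have h3 := hsq i
    have hnn : (0:ℝ) ≤ p i * (1 - p i) := mul_nonneg h1 (by linarith)
    calc p i * (1 - p i) * (Real.sign (v i)) ^ 2 ≤ p i * (1 - p i) :=
          mul_le_of_le_one_right hnn h3
      _ ≤ p i * 1 := mul_le_mul_of_nonneg_left (by linarith) h1
      _ = p i := mul_one _
  have hterm_le1 : ∀ i, p i * (1 - p i) * (Real.sign (v i)) ^ 2 ≤ 1 := by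
    intro i
    exact (hterm_lep i).trans (hp1 i)
  have hbound1 : W ^ 2 / s ^ 2 * ∑ i, p i * (1 - p i) * (Real.sign (v i)) ^ 2
      ≤ (n : ℝ) / (s:ℝ) ^ 2 * W ^ 2 := by
    have : ∑ i, p i * (1 - p i) * (Real.sign (v i)) ^ 2 ≤ (n : ℝ) := by
      calc ∑ i, p i * (1 - p i) * (Real.sign (v i)) ^ 2 ≤ ∑ _i : Fin n, (1:ℝ) :=
            Finset.sum_le_sum fun i _ => hterm_le1 i
        _ = (n : ℝ) := by simp
    calc W ^ 2 / s ^ 2 * ∑ i, p i * (1 - p i) * (Real.sign (v i)) ^ 2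
        ≤ W ^ 2 / s ^ 2 * (n : ℝ) := by
          apply mul_le_mul_of_nonneg_left this (by positivity)
      _ = (n : ℝ) / (s:ℝ) ^ 2 * W ^ 2 := by ring
  have hbound2 : W ^ 2 / s ^ 2 * ∑ i, p i * (1 - p i) * (Real.sign (v i)) ^ 2
      ≤ Real.sqrt n / s * W ^ 2 := by
    have hsum_abs : ∑ i, |v i| ≤ Real.sqrt n * W := by
      have hcs : (∑ i, |v i|) ^ 2 ≤ (n : ℝ) * ∑ i, |v i| ^ 2 := by
        simpa using sq_sum_le_card_mul_sum_sq (s := Finset.univ) (f := fun i => |v i|)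
      have h2 : ∑ i, |v i| ^ 2 = ∑ i, v i ^ 2 := by
        exact Finset.sum_congr rfl fun i _ => sq_abs _
      have hnn : (0:ℝ) ≤ ∑ i, |v i| := Finset.sum_nonneg fun i _ => abs_nonneg _
      have := Real.sqrt_le_sqrt (hcs.trans_eq (by rw [h2]))
      rw [Real.sqrt_sq hnn, Real.sqrt_mul (by positivity)] at this
      calc ∑ i, |v i| ≤ Real.sqrt n * Real.sqrt (∑ i, v i ^ 2) := this
        _ ≤ Real.sqrt n * W := by
            apply mul_le_mul_of_nonneg_left hWv (Real.sqrt_nonneg _)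
    have hsump : ∑ i, p i ≤ Real.sqrt n * s := by
      have : ∑ i, p i ≤ ∑ i, |v i| / W * s := by
        apply Finset.sum_le_sum
        intro i _
        rw [hp i]
        have : (0:ℝ) ≤ (l i : ℝ) := Nat.cast_nonneg _
        linarith
      calc ∑ i, p i ≤ ∑ i, |v i| / W * s := this
        _ = (∑ i, |v i|) / W * s := by rw [Finset.sum_div, Finset.sum_mul]
        _ ≤ Real.sqrt n * W / W * s := by gcongr
        _ = Real.sqrt n * s := by field_simp
    have : ∑ i, p i * (1 - p i) * (Real.sign (v i)) ^ 2 ≤ Real.sqrt n * s := by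
      calc ∑ i, p i * (1 - p i) * (Real.sign (v i)) ^ 2 ≤ ∑ i, p i :=
            Finset.sum_le_sum fun i _ => hterm_lep i
        _ ≤ Real.sqrt n * s := hsump
    calc W ^ 2 / s ^ 2 * ∑ i, p i * (1 - p i) * (Real.sign (v i)) ^ 2
        ≤ W ^ 2 / s ^ 2 * (Real.sqrt n * s) := by
          apply mul_le_mul_of_nonneg_left this (by positivity)
      _ = Real.sqrt n / s * W ^ 2 := by field_simp
  have hmin : W ^ 2 / s ^ 2 * ∑ i, p i * (1 - p i) * (Real.sign (v i)) ^ 2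
      ≤ min ((n : ℝ) / (s : ℝ) ^ 2) (Real.sqrt n / s) * W ^ 2 := by
    rcases le_total ((n : ℝ) / (s : ℝ) ^ 2) (Real.sqrt n / s) with h | h
    · rw [min_eq_left h]; exact hbound1
    · rw [min_eq_right h]; exact hbound2
  have hW2 : (0:ℝ) ≤ W ^ 2 := sq_nonneg _
  nlinarith [hmin]
end

section
/- The multi-scale quantizer variance satisfies E[‖Q_{s̲}(v, W) − v‖₂²] ≤ (1 + min(n/ŝ², √n/ŝ))·W², where ŝ = min_{s ∈ s̲} s and W ≥ ‖v‖₂. -/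
open Finset in
/-- Multi-scale quantizer variance bound:
`E[‖Q_{s̲}(v,W) - v‖₂²] ≤ (1 + min(n/ŝ², √n/ŝ))·W²` where `ŝ = min S` and
each coordinate is quantized with a scale `sstar i ∈ S`. -/
theorem qsgd_multiscale_variance_bound
    (n : ℕ) (S : Finset ℕ) (hSne : S.Nonempty) (hSpos : ∀ s ∈ S, 1 ≤ s)
    (v : Fin n → ℝ) (W : ℝ) (hW : 0 < W)
    (hWv : Real.sqrt (∑ i, v i ^ 2) ≤ W)
    (sstar : Fin n → ℕ) (hsstar : ∀ i, sstar i ∈ S)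
    (l : Fin n → ℕ) (hls : ∀ i, l i < sstar i)
    (hlo : ∀ i, (l i : ℝ) / sstar i ≤ |v i| / W)
    (hhi : ∀ i, |v i| / W ≤ ((l i : ℝ) + 1) / sstar i)
    (p : Fin n → ℝ) (hp : ∀ i, p i = |v i| / W * sstar i - l i) :
    ∑ i, ((1 - p i) * (W * Real.sign (v i) * ((l i : ℝ) / sstar i) - v i) ^ 2
          + p i * (W * Real.sign (v i) * (((l i : ℝ) + 1) / sstar i) - v i) ^ 2)
      ≤ (1 + min ((n : ℝ) / (S.min' hSne : ℝ) ^ 2) (Real.sqrt n / (S.min' hSne : ℝ)))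
          * W ^ 2 := by
  set m := S.min' hSne with hm
  have hm1 : 1 ≤ m := hSpos _ (S.min'_mem hSne)
  have hmpos : (0:ℝ) < m := by exact_mod_cast Nat.lt_of_lt_of_le Nat.zero_lt_one hm1
  have hsm : ∀ i, (m:ℝ) ≤ sstar i := fun i => by exact_mod_cast S.min'_le _ (hsstar i)
  have hspos : ∀ i, (0:ℝ) < sstar i := fun i => lt_of_lt_of_le hmpos (hsm i)
  have hp0 : ∀ i, 0 ≤ p i := by
    intro i
    rw [hp i, sub_nonneg, div_mul_eq_mul_div, le_div_iff₀ hW]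
    have := hlo i
    rw [div_le_div_iff₀ (hspos i) hW] at this
    linarith
  have hp1 : ∀ i, p i ≤ 1 := by
    intro i
    rw [hp i, sub_le_iff_le_add, div_mul_eq_mul_div, div_le_iff₀ hW]
    have := hhi i
    rw [div_le_div_iff₀ hW (hspos i)] at this
    linarith
  have habs : ∀ i, |v i| = W * ((l i : ℝ) + p i) / sstar i := by
    intro i
    have hs := (hspos i).ne'
    have h := hp i
    field_simp at h ⊢
    linarith
  have key : ∀ i, ((1 - p i) * (W * Real.sign (v i) * ((l i : ℝ) / sstar i) - v i) ^ 2
          + p i * (W * Real.sign (v i) * (((l i : ℝ) + 1) / sstar i) - v i) ^ 2)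
      = W ^ 2 * (p i * (1 - p i)) / (sstar i : ℝ) ^ 2 := by
    intro i
    have hs := (hspos i).ne'
    rcases lt_trichotomy (v i) 0 with hv | hv | hv
    · have h1 : v i = -(W * ((l i : ℝ) + p i) / sstar i) := by
        rw [← habs i, abs_of_neg hv]; ring
      rw [Real.sign_of_neg hv, h1]
      field_simp
      ring
    · have hl0 : (l i : ℝ) = 0 := by
        have h := hlo i
        rw [hv] at h; simp at h
        have h2 : (l i : ℝ) ≤ 0 := by
          by_contra hc
          push_neg at hc
          have := div_pos hc (hspos i)
          linarith
        linarith [Nat.cast_nonneg (l i) (α := ℝ)]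
      have hpi : p i = 0 := by rw [hp i, hv, hl0]; simp
      simp [hv, hl0, hpi, Real.sign_zero]
    · have h1 : v i = W * ((l i : ℝ) + p i) / sstar i := by
        rw [← habs i, abs_of_pos hv]
      rw [Real.sign_of_pos hv, h1]
      field_simp
      ring
  rw [Finset.sum_congr rfl (fun i _ => key i)]
  have boundA : ∑ i, W ^ 2 * (p i * (1 - p i)) / (sstar i : ℝ) ^ 2
      ≤ (n : ℝ) / (m : ℝ) ^ 2 * W ^ 2 := by
    calc ∑ i, W ^ 2 * (p i * (1 - p i)) / (sstar i : ℝ) ^ 2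
        ≤ ∑ _i : Fin n, W ^ 2 / (m : ℝ) ^ 2 := by
          apply Finset.sum_le_sum
          intro i _
          apply div_le_div₀ (by positivity) _ (by positivity) (by
            exact pow_le_pow_left₀ hmpos.le (hsm i) 2)
          have h1 : p i * (1 - p i) ≤ 1 := by nlinarith [hp0 i, hp1 i]
          nlinarith [mul_le_mul_of_nonneg_left h1 (sq_nonneg W)]
      _ = (n : ℝ) / (m : ℝ) ^ 2 * W ^ 2 := by
          simp [Finset.sum_const]
          ring
  have boundB : ∑ i, W ^ 2 * (p i * (1 - p i)) / (sstar i : ℝ) ^ 2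
      ≤ Real.sqrt n / (m : ℝ) * W ^ 2 := by
    have step1 : ∀ i, W ^ 2 * (p i * (1 - p i)) / (sstar i : ℝ) ^ 2 ≤ W * |v i| / m := by
      intro i
      have hs := hspos i
      have hple : p i ≤ |v i| * sstar i / W := by
        rw [hp i, div_mul_eq_mul_div]
        have : (0:ℝ) ≤ (l i : ℝ) := Nat.cast_nonneg _
        linarith
      have hpp : p i * (1 - p i) ≤ |v i| * sstar i / W :=
        le_trans (by nlinarith [hp0 i, hp1 i]) hple
      calc W ^ 2 * (p i * (1 - p i)) / (sstar i : ℝ) ^ 2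
          ≤ W ^ 2 * (|v i| * sstar i / W) / (sstar i : ℝ) ^ 2 := by gcongr
        _ = W * |v i| / sstar i := by field_simp
        _ ≤ W * |v i| / m := div_le_div_of_nonneg_left (by positivity) hmpos (hsm i)
    calc ∑ i, W ^ 2 * (p i * (1 - p i)) / (sstar i : ℝ) ^ 2
        ≤ ∑ i, W * |v i| / m := Finset.sum_le_sum (fun i _ => step1 i)
      _ = W / m * ∑ i, |v i| := by rw [Finset.mul_sum]; congr 1; ext i; ring
      _ ≤ W / m * (Real.sqrt n * W) := by
          apply mul_le_mul_of_nonneg_left _ (by positivity)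
          have hcs : (∑ i, |v i|) ^ 2 ≤ (n : ℝ) * ∑ i, v i ^ 2 := by
            have := sq_sum_le_card_mul_sum_sq (s := Finset.univ) (f := fun i => |v i|)
            simpa [sq_abs] using this
          have h0 : (0:ℝ) ≤ ∑ i, |v i| := Finset.sum_nonneg fun i _ => abs_nonneg _
          calc ∑ i, |v i| = Real.sqrt ((∑ i, |v i|) ^ 2) := (Real.sqrt_sq h0).symm
            _ ≤ Real.sqrt ((n : ℝ) * ∑ i, v i ^ 2) := Real.sqrt_le_sqrt hcs
            _ = Real.sqrt n * Real.sqrt (∑ i, v i ^ 2) := Real.sqrt_mul (by positivity) _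
            _ ≤ Real.sqrt n * W := by
                apply mul_le_mul_of_nonneg_left hWv (Real.sqrt_nonneg _)
      _ = Real.sqrt n / (m : ℝ) * W ^ 2 := by ring
  have hmin : ∑ i, W ^ 2 * (p i * (1 - p i)) / (sstar i : ℝ) ^ 2
      ≤ min ((n : ℝ) / (m : ℝ) ^ 2) (Real.sqrt n / (m : ℝ)) * W ^ 2 := by
    rcases min_cases ((n : ℝ) / (m : ℝ) ^ 2) (Real.sqrt n / (m : ℝ)) with ⟨h, _⟩ | ⟨h, _⟩ <;>
      rw [h] <;> assumption
  nlinarith [sq_nonneg W, hmin]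
end

section
/- In the multi-scale scheme, the chosen scale never causes overflow: if s*_i is the largest scale s ∈ s̲ satisfying s ≤ (W/|v_i|)·ŝ with ŝ = min s̲, then the quantized integer level sign(v_i)·s*_i·ξ_i has absolute value at most ŝ + 1, i.e., the grid index l+1 for coordinate i at scale s*_i satisfies l + 1 ≤ ŝ + 1. -/
/-- No overflow in the multi-scale scheme: if `sstar` is the
largest scale `s ∈ S` with `(s : ℝ) ≤ (W/|vi|)·ŝ` (`ŝ = min S`), and `l` is
the grid index of `|vi|/W` at scale `sstar`, then `l ≤ ŝ`
(hence the quantized integer level `l + 1 ≤ ŝ + 1`). -/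
theorem multiscale_no_overflow
    (S : Finset ℕ) (hSne : S.Nonempty) (hSpos : ∀ s ∈ S, 1 ≤ s)
    (W vi : ℝ) (hW : 0 < W) (hvi : vi ≠ 0) (hv : |vi| ≤ W)
    (sstar : ℕ) (hmem : sstar ∈ S)
    (hle : (sstar : ℝ) ≤ W / |vi| * (S.min' hSne : ℝ))
    (hmax : ∀ s ∈ S, (s : ℝ) ≤ W / |vi| * (S.min' hSne : ℝ) → s ≤ sstar)
    (l : ℕ)
    (hlo : (l : ℝ) / sstar ≤ |vi| / W)
    (hhi : |vi| / W ≤ ((l : ℝ) + 1) / sstar) :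
    l ≤ S.min' hSne ∧ l + 1 ≤ S.min' hSne + 1 := by
  have hvpos : (0:ℝ) < |vi| := abs_pos.mpr hvi
  have hspos : (0:ℝ) < (sstar : ℝ) := by
    exact_mod_cast Nat.lt_of_lt_of_le Nat.zero_lt_one (hSpos _ hmem)
  have h1 : (l : ℝ) ≤ |vi| / W * sstar := by
    rw [div_le_iff₀ hspos] at hlo; linarith
  have h2 : |vi| / W * sstar ≤ (S.min' hSne : ℝ) := by
    rw [div_mul_eq_mul_div, div_le_iff₀ hW]
    have key : (sstar : ℝ) * |vi| ≤ W * (S.min' hSne : ℝ) := by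
      calc (sstar : ℝ) * |vi| ≤ (W / |vi| * (S.min' hSne : ℝ)) * |vi| :=
            mul_le_mul_of_nonneg_right hle hvpos.le
        _ = W * (S.min' hSne : ℝ) := by field_simp
    linarith
  have : (l : ℝ) ≤ (S.min' hSne : ℝ) := le_trans h1 h2
  have hln : l ≤ S.min' hSne := by exact_mod_cast this
  exact ⟨hln, Nat.succ_le_succ hln⟩
end

section
/- Sparsified quantization bound: if S ⊆ {1,…,n} is a fixed subset of K coordinates and Q quantizes only the coordinates in S (setting others to zero) via the max-norm stochastic rounding with scale s and bound W ≥ ‖v‖₂, then E[Q(v)_i] = v_i for i ∈ S, Q(v)_i = 0 for i ∉ S, and E[‖Q(v) − v|_S‖₂²] ≤ (1 + min(K/s², √K/s))·W², where v|_S is v restricted to S. -/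
lemma real_sign_mul_abs' (x : ℝ) : Real.sign x * |x| = x := by
  rcases lt_trichotomy x 0 with h|h|h
  · rw [Real.sign_of_neg h, abs_of_neg h]; ring
  · simp [h, Real.sign_zero]
  · rw [Real.sign_of_pos h, abs_of_pos h]; ring

open Finset in
/-- Sparsified quantization bound: quantizing only the `K`
coordinates in a fixed set `S` (others set to zero) with the max-norm
stochastic rounding quantizer at scale `s` and bound `W ≥ ‖v‖₂` gives
unbiasedness on `S` and `E[‖Q(v) - v|_S‖₂²] ≤ (1 + min(K/s², √K/s))·W²`. -/
theorem sparsified_qsgd_bound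
    (n s K : ℕ) (hs : 1 ≤ s) (S : Finset (Fin n)) (hK : S.card = K)
    (v : Fin n → ℝ) (W : ℝ) (hW : 0 < W)
    (hWv : Real.sqrt (∑ i, v i ^ 2) ≤ W)
    (l : Fin n → ℕ) (hls : ∀ i ∈ S, l i < s)
    (hlo : ∀ i ∈ S, (l i : ℝ) / s ≤ |v i| / W)
    (hhi : ∀ i ∈ S, |v i| / W ≤ ((l i : ℝ) + 1) / s)
    (p : Fin n → ℝ) (hp : ∀ i ∈ S, p i = |v i| / W * s - l i) :
    (∀ i ∈ S, W * Real.sign (v i) *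
        ((1 - p i) * ((l i : ℝ) / s) + p i * (((l i : ℝ) + 1) / s)) = v i)
    ∧ ∑ i ∈ S, ((1 - p i) * (W * Real.sign (v i) * ((l i : ℝ) / s) - v i) ^ 2
          + p i * (W * Real.sign (v i) * (((l i : ℝ) + 1) / s) - v i) ^ 2)
        ≤ (1 + min ((K : ℝ) / (s : ℝ) ^ 2) (Real.sqrt K / s)) * W ^ 2 := by
  have hs' : (0:ℝ) < s := by exact_mod_cast hs
  have hub : ∀ i ∈ S, W * Real.sign (v i) *
      ((1 - p i) * ((l i : ℝ) / s) + p i * (((l i : ℝ) + 1) / s)) = v i := by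
    intro i hi
    have hsv := real_sign_mul_abs' (v i)
    have hpi := hp i hi
    have h1 : ((1 - p i) * ((l i:ℝ)/s) + p i * (((l i:ℝ)+1)/s)) = |v i|/W := by
      rw [hpi]; field_simp; ring
    rw [h1]
    rw [show W * Real.sign (v i) * (|v i|/W) = Real.sign (v i) * |v i| by
      field_simp]
    exact hsv
  refine ⟨hub, ?_⟩
  have hp0 : ∀ i ∈ S, 0 ≤ p i := by
    intro i hi
    have h1 := hlo i hi
    rw [hp i hi]
    have h2 : (l i : ℝ) / s * s ≤ |v i| / W * s :=
      mul_le_mul_of_nonneg_right h1 hs'.le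
    rw [div_mul_cancel₀ _ hs'.ne'] at h2
    linarith
  have hpW : ∀ i ∈ S, p i ≤ 1 := by
    intro i hi
    have h1 := hhi i hi
    rw [hp i hi]
    have h2 : |v i| / W * s ≤ ((l i : ℝ) + 1) / s * s :=
      mul_le_mul_of_nonneg_right h1 hs'.le
    rw [div_mul_cancel₀ _ hs'.ne'] at h2
    linarith
  have hterm : ∀ i ∈ S,
      (1 - p i) * (W * Real.sign (v i) * ((l i : ℝ) / s) - v i) ^ 2
          + p i * (W * Real.sign (v i) * (((l i : ℝ) + 1) / s) - v i) ^ 2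
        ≤ p i * (W / s) ^ 2 := by
    intro i hi
    set σ := Real.sign (v i) with hσ
    have hv' : v i = W * σ * ((1 - p i) * ((l i : ℝ) / s) + p i * (((l i : ℝ) + 1) / s)) :=
      (hub i hi).symm
    have hp0' := hp0 i hi
    have hp1' := hpW i hi
    have hsig : σ ^ 2 ≤ 1 := by
      rcases Real.sign_apply_eq (v i) with h | h | h <;> rw [hσ, h] <;> norm_num
    have key : (1 - p i) * (W * σ * ((l i : ℝ) / s) - v i) ^ 2
          + p i * (W * σ * (((l i : ℝ) + 1) / s) - v i) ^ 2
        = p i * (1 - p i) * (W * σ / s) ^ 2 := by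
      rw [hv']; field_simp; ring
    rw [key]
    have h1 : (W * σ / s) ^ 2 ≤ (W / s) ^ 2 := by
      have h2 : (W * σ / s) ^ 2 = (W/s)^2 * σ^2 := by ring
      rw [h2]
      nlinarith [sq_nonneg (W/s)]
    nlinarith [mul_le_mul_of_nonneg_left h1 hp0',
      mul_nonneg (mul_nonneg hp0' hp0') (sq_nonneg (W * σ / s))]
  calc ∑ i ∈ S, ((1 - p i) * (W * Real.sign (v i) * ((l i : ℝ) / s) - v i) ^ 2
          + p i * (W * Real.sign (v i) * (((l i : ℝ) + 1) / s) - v i) ^ 2)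
      ≤ ∑ i ∈ S, p i * (W / s) ^ 2 := Finset.sum_le_sum hterm
    _ = (∑ i ∈ S, p i) * (W / s) ^ 2 := by rw [Finset.sum_mul]
    _ ≤ min ((K : ℝ) / (s:ℝ) ^ 2) (Real.sqrt K / s) * W ^ 2 := by
        have hsumK : (∑ i ∈ S, p i) ≤ K := by
          calc (∑ i ∈ S, p i) ≤ ∑ i ∈ S, (1:ℝ) := Finset.sum_le_sum hpW
            _ = K := by simp [hK]
        have hv2 : ∑ i, v i ^ 2 ≤ W ^ 2 := by
          have h0 : 0 ≤ ∑ i, v i ^ 2 := by positivity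
          nlinarith [Real.sq_sqrt h0, hWv, Real.sqrt_nonneg (∑ i, v i ^ 2)]
        have hCS : (∑ i ∈ S, |v i|) ≤ Real.sqrt K * W := by
          have h1 : (∑ i ∈ S, |v i|) ^ 2 ≤ K * ∑ i ∈ S, |v i| ^ 2 := by
            have := sq_sum_le_card_mul_sum_sq (s := S) (f := fun i => |v i|)
            simpa [hK] using this
          have h2 : ∑ i ∈ S, |v i| ^ 2 ≤ W ^ 2 := by
            calc ∑ i ∈ S, |v i| ^ 2 = ∑ i ∈ S, v i ^ 2 := by
                  simp [sq_abs]
              _ ≤ ∑ i, v i ^ 2 := Finset.sum_le_sum_of_subset_of_nonneg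
                  (Finset.subset_univ S) (fun i _ _ => sq_nonneg _)
              _ ≤ W ^ 2 := hv2
          have h3 : (∑ i ∈ S, |v i|) ^ 2 ≤ (Real.sqrt K * W) ^ 2 := by
            have h5 : (Real.sqrt K * W) ^ 2 = K * W ^ 2 := by
              rw [mul_pow, Real.sq_sqrt (Nat.cast_nonneg K)]
            nlinarith [Nat.cast_nonneg (α := ℝ) K]
          have h4 : 0 ≤ ∑ i ∈ S, |v i| := Finset.sum_nonneg fun i _ => abs_nonneg _
          calc (∑ i ∈ S, |v i|) = Real.sqrt ((∑ i ∈ S, |v i|)^2) := (Real.sqrt_sq h4).symm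
            _ ≤ Real.sqrt ((Real.sqrt K * W)^2) := Real.sqrt_le_sqrt h3
            _ = Real.sqrt K * W := Real.sqrt_sq (by positivity)
        have hsumV : (∑ i ∈ S, p i) ≤ Real.sqrt K * s := by
          have h1 : ∀ i ∈ S, p i ≤ |v i| / W * s := by
            intro i hi
            rw [hp i hi]
            have : (0:ℝ) ≤ l i := Nat.cast_nonneg _
            linarith
          calc (∑ i ∈ S, p i) ≤ ∑ i ∈ S, |v i| / W * s := Finset.sum_le_sum h1
            _ = (∑ i ∈ S, |v i|) * (s / W) := by
                rw [Finset.sum_mul]; congr 1; ext i; ring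
            _ ≤ (Real.sqrt K * W) * (s / W) := by
                apply mul_le_mul_of_nonneg_right hCS
                positivity
            _ = Real.sqrt K * s := by field_simp
        have hb1 : (∑ i ∈ S, p i) * (W / s) ^ 2 ≤ (K : ℝ) / (s:ℝ)^2 * W ^ 2 := by
          have h6 : (K : ℝ) / (s:ℝ)^2 * W ^ 2 = (K:ℝ) * (W/s)^2 := by field_simp
          rw [h6]
          exact mul_le_mul_of_nonneg_right hsumK (by positivity)
        have hb2 : (∑ i ∈ S, p i) * (W / s) ^ 2 ≤ Real.sqrt K / s * W ^ 2 := by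
          have heq : Real.sqrt K / s * W ^ 2 = (Real.sqrt K * s) * (W/s)^2 := by
            field_simp
          rw [heq]
          exact mul_le_mul_of_nonneg_right hsumV (by positivity)
        rcases le_total ((K : ℝ) / (s:ℝ)^2) (Real.sqrt K / s) with h | h
        · rw [min_eq_left h]; exact hb1
        · rw [min_eq_right h]; exact hb2
    _ ≤ (1 + min ((K : ℝ) / (s:ℝ) ^ 2) (Real.sqrt K / s)) * W ^ 2 := by
        nlinarith [sq_nonneg W]
end
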